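/- Let a > 0, ε > 0, λ > 0 and d ≥ 1 an integer. Then the series −∑_{k=1}^∞ (−1)^k λ^k (a k (2ε)^{k−1})^d / k! converges absolutely and equals (a/(2ε))^d e^{−λ(2ε)^d} (−B_d(−λ(2ε)^d)), where B_d is the d-th Bell polynomial. (This is the closed form for the mean Euler characteristic E[χ] = −∑_{k≥1} (−1)^k E[N_k] of the random Čech complex on the torus T_a^d, since E[N_k] = λ^k (a k (2ε)^{k−1})^d / k!.) -/

import Mathlib

/-- Stirling numbers of the second kind, via the standard recurrence
`S(n+1, k+1) = (k+1) S(n, k+1) + S(n, k)`. -/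
def stirlingSecond : ℕ → ℕ → ℕ
  | 0, 0 => 1
  | 0, _ + 1 => 0
  | _ + 1, 0 => 0
  | n + 1, k + 1 => (k + 1) * stirlingSecond n (k + 1) + stirlingSecond n k

/-- The `d`-th Bell polynomial `B_d(x) = ∑_{k=0}^d S(d,k) x^k`. -/
noncomputable def bellPoly (d : ℕ) (x : ℝ) : ℝ :=
  ∑ k ∈ Finset.range (d + 1), (stirlingSecond d k : ℝ) * x ^ k

lemma stirling_eq_zero : ∀ n k : ℕ, n < k → stirlingSecond n k = 0
  | 0, _ + 1, _ => rfl
  | n + 1, k + 1, h => by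
    rw [stirlingSecond, stirling_eq_zero n (k+1) (by omega), stirling_eq_zero n k (by omega)]
    ring

lemma mul_descFactorial (n k : ℕ) :
    n * n.descFactorial k = n.descFactorial (k + 1) + k * n.descFactorial k := by
  rcases le_or_gt k n with h | h
  · rw [Nat.descFactorial_succ]
    have : n - k + k = n := by omega
    nlinarith [Nat.descFactorial_succ n k]
  · rw [Nat.descFactorial_of_lt h, Nat.descFactorial_of_lt (by omega)]
    ring

lemma pow_eq_sum_stirling (d n : ℕ) :
    n ^ d = ∑ k ∈ Finset.range (d + 1), stirlingSecond d k * n.descFactorial k := by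
  induction d with
  | zero => simp [stirlingSecond]
  | succ d ih =>
    have h1 : n ^ (d + 1) = ∑ k ∈ Finset.range (d + 1),
        (stirlingSecond d k * n.descFactorial (k + 1)
          + k * stirlingSecond d k * n.descFactorial k) := by
      rw [pow_succ, ih, Finset.sum_mul]
      refine Finset.sum_congr rfl fun k _ => ?_
      rw [mul_comm _ n]
      rw [show n * (stirlingSecond d k * n.descFactorial k)
          = stirlingSecond d k * (n * n.descFactorial k) by ring, mul_descFactorial]
      ring
    rw [h1, Finset.sum_add_distrib]
    have h2 : ∑ k ∈ Finset.range (d + 1), k * stirlingSecond d k * n.descFactorial k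
        = ∑ k ∈ Finset.range (d + 1), (k + 1) * stirlingSecond d (k + 1)
            * n.descFactorial (k + 1) := by
      rw [Finset.sum_range_succ' (fun k => k * stirlingSecond d k * n.descFactorial k)]
      rw [Finset.sum_range_succ]
      simp [stirling_eq_zero d (d + 1) (by omega)]
    rw [h2, ← Finset.sum_add_distrib]
    rw [Finset.sum_range_succ' (fun k => stirlingSecond (d+1) k * n.descFactorial k)]
    simp only [stirlingSecond, Nat.add_comm 1]
    rw [Finset.sum_congr rfl (fun k _ => by ring :
      ∀ k ∈ Finset.range (d+1), stirlingSecond d k * n.descFactorial (k + 1)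
        + (k + 1) * stirlingSecond d (k + 1) * n.descFactorial (k + 1)
        = ((k + 1) * stirlingSecond d (k + 1) + stirlingSecond d k) * n.descFactorial (k+1))]
    simp

lemma hasSum_exp_div (x : ℝ) : HasSum (fun n : ℕ => x ^ n / n.factorial) (Real.exp x) := by
  have := NormedSpace.exp_series_hasSum_exp' (𝕂 := ℝ) x
  rw [← Real.exp_eq_exp_ℝ] at this
  simpa [div_eq_inv_mul, smul_eq_mul] using this

lemma hasSum_desc (k : ℕ) (x : ℝ) :
    HasSum (fun n : ℕ => (n.descFactorial k : ℝ) * x ^ n / n.factorial)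
      (x ^ k * Real.exp x) := by
  rw [← hasSum_nat_add_iff' k]
  have hz : ∑ i ∈ Finset.range k,
      (i.descFactorial k : ℝ) * x ^ i / i.factorial = 0 := by
    refine Finset.sum_eq_zero fun i hi => ?_
    rw [Nat.descFactorial_of_lt (Finset.mem_range.mp hi)]
    simp
  rw [hz, sub_zero]
  have heq : ∀ n : ℕ, ((n + k).descFactorial k : ℝ) * x ^ (n + k) / (n + k).factorial
      = x ^ k * (x ^ n / n.factorial) := by
    intro n
    have hnat : n.factorial * ((n + k).descFactorial k) = (n + k).factorial := by
      have h := Nat.factorial_mul_descFactorial (Nat.le_add_left k n)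
      rwa [Nat.add_sub_cancel] at h
    have hf : (n.factorial : ℝ) * ((n + k).descFactorial k : ℝ) = ((n + k).factorial : ℝ) := by
      exact_mod_cast congrArg (Nat.cast : ℕ → ℝ) hnat
    have h1 : ((n + k).factorial : ℝ) ≠ 0 := Nat.cast_ne_zero.mpr (Nat.factorial_ne_zero _)
    have h2 : (n.factorial : ℝ) ≠ 0 := Nat.cast_ne_zero.mpr (Nat.factorial_ne_zero _)
    field_simp
    rw [← hf, pow_add]
    ring
  have hfun : (fun n : ℕ => ((n + k).descFactorial k : ℝ) * x ^ (n + k) / (n + k).factorial)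
      = fun n : ℕ => x ^ k * (x ^ n / n.factorial) := funext heq
  exact hfun ▸ (hasSum_exp_div x).mul_left (x ^ k)

lemma hasSum_pow_bell (d : ℕ) (x : ℝ) :
    HasSum (fun n : ℕ => (n : ℝ) ^ d * x ^ n / n.factorial)
      (Real.exp x * bellPoly d x) := by
  have h : HasSum (fun n : ℕ => ∑ k ∈ Finset.range (d + 1),
        (stirlingSecond d k : ℝ) * ((n.descFactorial k : ℝ) * x ^ n / n.factorial))
      (∑ k ∈ Finset.range (d + 1), (stirlingSecond d k : ℝ) * (x ^ k * Real.exp x)) :=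
    hasSum_sum fun k _ => (hasSum_desc k x).mul_left (stirlingSecond d k : ℝ)
  have hval : ∑ k ∈ Finset.range (d + 1),
      (stirlingSecond d k : ℝ) * (x ^ k * Real.exp x) = Real.exp x * bellPoly d x := by
    rw [bellPoly, Finset.mul_sum]
    exact Finset.sum_congr rfl fun k _ => by ring
  rw [hval] at h
  have hfun : (fun n : ℕ => (n : ℝ) ^ d * x ^ n / n.factorial)
      = fun n : ℕ => ∑ k ∈ Finset.range (d + 1),
        (stirlingSecond d k : ℝ) * ((n.descFactorial k : ℝ) * x ^ n / n.factorial) := by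
    funext n
    have hcast : ((n : ℝ)) ^ d = ∑ k ∈ Finset.range (d + 1),
        (stirlingSecond d k : ℝ) * (n.descFactorial k : ℝ) := by
      exact_mod_cast congrArg (Nat.cast : ℕ → ℝ) (pow_eq_sum_stirling d n)
    rw [hcast, Finset.sum_mul, Finset.sum_div]
    exact Finset.sum_congr rfl fun k _ => by ring
  exact hfun ▸ h

lemma hshift (d : ℕ) (hd : 1 ≤ d) (x : ℝ) :
    HasSum (fun k : ℕ => ((k : ℝ) + 1) ^ d * x ^ (k + 1) / (Nat.factorial (k + 1) : ℝ))
      (Real.exp x * bellPoly d x) := by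
  have h := (hasSum_nat_add_iff' (f := fun n : ℕ => (n : ℝ) ^ d * x ^ n / n.factorial) 1).mpr
    (hasSum_pow_bell d x)
  have h0 : ∑ i ∈ Finset.range 1, ((i : ℝ)) ^ d * x ^ i / (i.factorial : ℝ) = 0 := by
    simp [zero_pow (by omega : d ≠ 0)]
  rw [h0, sub_zero] at h
  have hfun : (fun n : ℕ => (((n + 1 : ℕ)) : ℝ) ^ d * x ^ (n + 1) / (((n + 1 : ℕ)).factorial : ℝ))
      = fun k : ℕ => ((k : ℝ) + 1) ^ d * x ^ (k + 1) / (Nat.factorial (k + 1) : ℝ) := by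
    funext n
    push_cast
    ring
  exact hfun ▸ h


/-- Closed form for the mean Euler characteristic: the series
`−∑_{k≥1} (−1)^k λ^k (a k (2ε)^{k−1})^d / k!` converges absolutely and equals
`(a/(2ε))^d e^{−λ(2ε)^d} (−B_d(−λ(2ε)^d))`. -/
theorem mean_euler_characteristic_closed_form
    (a ε lam : ℝ) (ha : 0 < a) (hε : 0 < ε) (hlam : 0 < lam) (d : ℕ) (hd : 1 ≤ d) :
    Summable (fun k : ℕ =>
      |(-1 : ℝ) ^ (k + 1) * lam ^ (k + 1) * (a * ((k : ℝ) + 1) * (2 * ε) ^ k) ^ d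
        / (Nat.factorial (k + 1) : ℝ)|) ∧
    -(∑' k : ℕ, (-1 : ℝ) ^ (k + 1) * lam ^ (k + 1) * (a * ((k : ℝ) + 1) * (2 * ε) ^ k) ^ d
        / (Nat.factorial (k + 1) : ℝ))
      = (a / (2 * ε)) ^ d * Real.exp (-(lam * (2 * ε) ^ d))
          * (-bellPoly d (-(lam * (2 * ε) ^ d))) := by
  set t : ℝ := -(lam * (2 * ε) ^ d) with ht
  have he2 : (0 : ℝ) < 2 * ε := by linarith
  have hne : (2 * ε : ℝ) ≠ 0 := ne_of_gt he2
  have hc : (0 : ℝ) < (a / (2 * ε)) ^ d := pow_pos (div_pos ha he2) d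
  have key : ∀ k : ℕ,
      (-1 : ℝ) ^ (k + 1) * lam ^ (k + 1) * (a * ((k : ℝ) + 1) * (2 * ε) ^ k) ^ d
        / (Nat.factorial (k + 1) : ℝ)
      = (a / (2 * ε)) ^ d
          * (((k : ℝ) + 1) ^ d * t ^ (k + 1) / (Nat.factorial (k + 1) : ℝ)) := by
    intro k
    have hfac : ((k + 1).factorial : ℝ) ≠ 0 := Nat.cast_ne_zero.mpr (Nat.factorial_ne_zero _)
    have e1 : (a * ((k : ℝ) + 1) * (2 * ε) ^ k) ^ d
        = a ^ d * ((k : ℝ) + 1) ^ d * ((2 * ε) ^ k) ^ d := by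
      rw [mul_pow, mul_pow]
    have e2 : (-(lam * (2 * ε) ^ d)) ^ (k + 1)
        = (-1 : ℝ) ^ (k + 1) * lam ^ (k + 1) * ((2 * ε) ^ d) ^ (k + 1) := by
      rw [neg_pow, mul_pow]; ring
    have e3 : ((2 * ε) ^ d) ^ (k + 1) = ((2 * ε) ^ k) ^ d * (2 * ε) ^ d := by
      rw [← pow_mul, ← pow_mul, ← pow_add]
      congr 1
      ring
    rw [ht, e1, e2, e3, div_pow]
    field_simp
  have habs : ∀ k : ℕ,
      |(-1 : ℝ) ^ (k + 1) * lam ^ (k + 1) * (a * ((k : ℝ) + 1) * (2 * ε) ^ k) ^ d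
        / (Nat.factorial (k + 1) : ℝ)|
      = (a / (2 * ε)) ^ d
          * (((k : ℝ) + 1) ^ d * |t| ^ (k + 1) / (Nat.factorial (k + 1) : ℝ)) := by
    intro k
    rw [key k, abs_mul, abs_of_pos hc, abs_div, abs_mul, abs_pow, abs_pow,
      abs_of_nonneg (by positivity : (0 : ℝ) ≤ (k : ℝ) + 1), Nat.abs_cast]
  constructor
  · exact (((hshift d hd |t|).mul_left ((a / (2 * ε)) ^ d)).summable).congr
      fun k => (habs k).symm
  · have hsum : HasSum
        (fun k : ℕ => (-1 : ℝ) ^ (k + 1) * lam ^ (k + 1)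
          * (a * ((k : ℝ) + 1) * (2 * ε) ^ k) ^ d / (Nat.factorial (k + 1) : ℝ))
        ((a / (2 * ε)) ^ d * (Real.exp t * bellPoly d t)) := by
      have h := (hshift d hd t).mul_left ((a / (2 * ε)) ^ d)
      exact (funext key) ▸ h
    rw [hsum.tsum_eq]
    ring
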